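/- Let n ≥ 2 and let x, x' ∈ {0,1}^n satisfy wt(x) ≡ wt(x') (mod 4). Suppose d_1, e_1, d_2, e_2 ∈ {1,…,n} with d_1 ≠ e_1, d_2 ≠ e_2, E(x, d_1, e_1) = E(x', d_2, e_2), and either e_1 < d_1 ≤ e_2 < d_2 or e_2 < d_1 < e_1 ≤ d_2. Define λ_2 = e_2 + 1 in the first case and λ_2 = e_1 in the second case, and let u_i = Σ_{ℓ=i}^n x_ℓ − Σ_{ℓ=i}^n x'_ℓ. Then: either u_i ≥ 0 for all i ∈ [1, λ_2 − 1] or u_i ≤ 0 for all i ∈ [1, λ_2 − 1]; either u_i ≥ 0 for all i ∈ [λ_2, n] or u_i ≤ 0 for all i ∈ [λ_2, n]; and |u_i| ≤ 2 for all i ∈ {1,…,n}. -/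

import Mathlib

/-- The bit of `x` at 1-based position `p` (junk value `0` out of range). -/
def getBit {n : ℕ} (x : Fin n → Fin 2) (p : ℕ) : Fin 2 :=
  if h : p - 1 < n then x ⟨p - 1, h⟩ else 0

/-- Hamming weight of a binary sequence. -/
def wt {n : ℕ} (x : Fin n → Fin 2) : ℕ := ∑ i, (x i : ℕ)

/-- The `j`-th order VT syndrome `f_j(x) = Σ_{i=1}^n (Σ_{ℓ=1}^i ℓ^{j-1}) x_i`. -/
def vtSyn {n : ℕ} (j : ℕ) (x : Fin n → Fin 2) : ℕ :=
  ∑ i : Fin n, (∑ l ∈ Finset.Icc 1 ((i : ℕ) + 1), l ^ (j - 1)) * (x i : ℕ)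

/-- Substitute the symbol at 1-based position `e` of `x` with its complement. -/
def substAt {n : ℕ} (x : Fin n → Fin 2) (e : ℕ) : Fin n → Fin 2 :=
  fun i => if (i : ℕ) + 1 = e then 1 - x i else x i

/-- Delete the symbol at 1-based position `d` of `x`. -/
def delAt {n : ℕ} (x : Fin n → Fin 2) (d : ℕ) : Fin (n - 1) → Fin 2 :=
  fun i => if (i : ℕ) + 1 < d then getBit x ((i : ℕ) + 1) else getBit x ((i : ℕ) + 2)

/-- `E(x,d,e)`: delete the symbol at position `d` and substitute the symbol at
position `e` of `x` (positions are 1-based, taken in the original `x`). -/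
def delSub {n : ℕ} (x : Fin n → Fin 2) (d e : ℕ) : Fin (n - 1) → Fin 2 :=
  delAt (substAt x e) d

/-- The single-deletion single-substitution error ball `B_{1,1}(x)`. -/
def ball {n : ℕ} (x : Fin n → Fin 2) : Set (Fin (n - 1) → Fin 2) :=
  {y | (∃ d ∈ Finset.Icc 1 n, y = delAt x d) ∨
       ∃ d ∈ Finset.Icc 1 n, ∃ e ∈ Finset.Icc 1 n, d ≠ e ∧ y = delSub x d e}

/-- The code `C_n(c0,c1,c2)`. -/
def codeC (n : ℕ) (c0 c1 c2 : ℕ) : Finset (Fin n → Fin 2) :=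
  Finset.univ.filter fun x =>
    x ≠ (fun _ => 0) ∧ x ≠ (fun _ => 1) ∧
    wt x % 4 = c0 ∧ vtSyn 1 x % (2 * n) = c1 ∧ vtSyn 2 x % (2 * n ^ 2) = c2

/-- `u_i = Σ_{ℓ=i}^n x_ℓ − Σ_{ℓ=i}^n x'_ℓ` (1-based positions, value in `ℤ`). -/
def uSeq {n : ℕ} (x x' : Fin n → Fin 2) (i : ℕ) : ℤ :=
  (∑ l ∈ Finset.Icc i n, ((getBit x l : ℕ) : ℤ)) -
    ∑ l ∈ Finset.Icc i n, ((getBit x' l : ℕ) : ℤ)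

lemma getBit_le {n : ℕ} (x : Fin n → Fin 2) (p : ℕ) : (getBit x p : ℕ) ≤ 1 := by
  have := (getBit x p).isLt; omega

lemma getBit_substAt {n : ℕ} (x : Fin n → Fin 2) (e k : ℕ) (h1 : 1 ≤ k) (h2 : k ≤ n) :
    getBit (substAt x e) k = if k = e then 1 - getBit x k else getBit x k := by
  have hk : k - 1 < n := by omega
  simp only [getBit, substAt, dif_pos hk]
  have : k - 1 + 1 = k := by omega
  rw [this]

lemma fin2_flip : ∀ v w : Fin 2, v = 1 - w → (v : ℕ) + (w : ℕ) = 1 := by decide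

lemma uSeq_succ {n : ℕ} (x x' : Fin n → Fin 2) (i : ℕ) (h : i ≤ n) :
    uSeq x x' i = (((getBit x i : ℕ) : ℤ) - ((getBit x' i : ℕ) : ℤ)) + uSeq x x' (i + 1) := by
  have hins : Finset.Icc i n = insert i (Finset.Icc (i+1) n) := by
    ext a; simp only [Finset.mem_Icc, Finset.mem_insert]; omega
  have hni : i ∉ Finset.Icc (i+1) n := by simp
  simp only [uSeq, hins, Finset.sum_insert hni]; ring

lemma uSeq_of_gt {n : ℕ} (x x' : Fin n → Fin 2) (i : ℕ) (h : n < i) : uSeq x x' i = 0 := by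
  have : Finset.Icc i n = ∅ := by rw [Finset.Icc_eq_empty]; omega
  simp [uSeq, this]

lemma sum_getBit {n : ℕ} (x : Fin n → Fin 2) :
    ∑ l ∈ Finset.Icc 1 n, ((getBit x l : ℕ) : ℤ) = (wt x : ℤ) := by
  have hmap : Finset.Icc 1 n = Finset.map ⟨fun i : ℕ => i + 1, add_left_injective 1⟩ (Finset.range n) := by
    ext a
    simp only [Finset.mem_Icc, Finset.mem_map, Finset.mem_range, Function.Embedding.coeFn_mk]
    constructor
    · intro h; exact ⟨a - 1, by omega, by omega⟩
    · rintro ⟨b, hb, rfl⟩; omega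
  rw [hmap, Finset.sum_map, wt]
  push_cast
  simp only [Function.Embedding.coeFn_mk]
  rw [← Fin.sum_univ_eq_sum_range (fun i => ((getBit x (i + 1) : ℕ) : ℤ)) n]
  apply Finset.sum_congr rfl
  intro i _
  simp [getBit, i.isLt]

lemma uSeq_one {n : ℕ} (x x' : Fin n → Fin 2) :
    uSeq x x' 1 = (wt x : ℤ) - (wt x' : ℤ) := by
  rw [uSeq, sum_getBit, sum_getBit]

lemma constZone {n : ℕ} (x x' : Fin n → Fin 2) (a c : ℕ) (hc : c ≤ n)
    (heq : ∀ l, a < l → l ≤ c → ((getBit x l : ℕ) : ℤ) = ((getBit x' l : ℕ) : ℤ)) :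
    ∀ i, a < i → i ≤ c + 1 → uSeq x x' i = uSeq x x' (c + 1) := by
  intro i hai hic
  obtain ⟨k, hk⟩ : ∃ k, c + 1 - i = k := ⟨_, rfl⟩
  induction k generalizing i with
  | zero =>
    have : i = c + 1 := by omega
    rw [this]
  | succ k ih =>
    have hi : i ≤ c := by omega
    rw [uSeq_succ x x' i (by omega), heq i hai hi,
      ih (i+1) (by omega) (by omega) (by omega)]
    ring

lemma shiftZone {n : ℕ} (x x' : Fin n → Fin 2) (a c : ℕ) (hc : c ≤ n)
    (heq : ∀ l, a < l → l ≤ c → ((getBit x l : ℕ) : ℤ) = ((getBit x' (l-1) : ℕ) : ℤ)) :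
    ∀ i, a < i → i ≤ c + 1 →
      uSeq x x' i = ((getBit x' (i-1) : ℕ) : ℤ) - ((getBit x' c : ℕ) : ℤ) + uSeq x x' (c+1) := by
  intro i hai hic
  obtain ⟨k, hk⟩ : ∃ k, c + 1 - i = k := ⟨_, rfl⟩
  induction k generalizing i with
  | zero =>
    have hi : i = c + 1 := by omega
    subst hi
    have : c + 1 - 1 = c := by omega
    rw [this]; ring
  | succ k ih =>
    have hi : i ≤ c := by omega
    rw [uSeq_succ x x' i (by omega), heq i hai hi,
      ih (i+1) (by omega) (by omega) (by omega)]
    have : i + 1 - 1 = i := by omega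
    rw [this]
    ring

/-- Abstract core lemma. -/
lemma main_aux {n : ℕ} (x x' : Fin n → Fin 2) (p d q r : ℕ)
    (h1p : 1 ≤ p) (hpd : p < d) (hdq : d ≤ q) (hqr : q + 1 ≤ r) (hrn : r ≤ n)
    (hmod : (4 : ℤ) ∣ uSeq x x' 1)
    (F1 : ∀ l, 1 ≤ l → l < p → ((getBit x l : ℕ) : ℤ) = ((getBit x' l : ℕ) : ℤ))
    (F2 : ((getBit x p : ℕ) : ℤ) + ((getBit x' p : ℕ) : ℤ) = 1)
    (F3 : ∀ l, p < l → l < d → ((getBit x l : ℕ) : ℤ) = ((getBit x' l : ℕ) : ℤ))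
    (F4 : ∀ l, d < l → l ≤ q → ((getBit x l : ℕ) : ℤ) = ((getBit x' (l-1) : ℕ) : ℤ))
    (F5 : ((getBit x (q+1) : ℕ) : ℤ) = 1 - ((getBit x' q : ℕ) : ℤ))
    (F6 : ∀ l, q + 1 < l → l ≤ r → ((getBit x l : ℕ) : ℤ) = ((getBit x' (l-1) : ℕ) : ℤ))
    (F7 : ∀ l, r < l → l ≤ n → ((getBit x l : ℕ) : ℤ) = ((getBit x' l : ℕ) : ℤ)) :
    ((∀ i ∈ Finset.Icc 1 q, 0 ≤ uSeq x x' i) ∨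
      (∀ i ∈ Finset.Icc 1 q, uSeq x x' i ≤ 0)) ∧
    ((∀ i ∈ Finset.Icc (q+1) n, 0 ≤ uSeq x x' i) ∨
      (∀ i ∈ Finset.Icc (q+1) n, uSeq x x' i ≤ 0)) ∧
    (∀ i ∈ Finset.Icc 1 n, |uSeq x x' i| ≤ 2) := by
  have hEb := getBit_le x' q
  have hBb := getBit_le x' r
  have hpb := getBit_le x p
  have hdb := getBit_le x d
  -- H7
  have H7 : ∀ i, r < i → uSeq x x' i = 0 := by
    intro i hi
    rcases le_or_gt i n with h | h
    · have h0 := constZone x x' r n le_rfl F7 i hi (by omega)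
      rw [h0, uSeq_of_gt x x' (n+1) (by omega)]
    · exact uSeq_of_gt x x' i h
  -- H6
  have H6 : ∀ i, q + 1 < i → i ≤ r + 1 →
      uSeq x x' i = ((getBit x' (i-1) : ℕ) : ℤ) - ((getBit x' r : ℕ) : ℤ) := by
    intro i hi1 hi2
    have h0 := shiftZone x x' (q+1) r hrn F6 i hi1 hi2
    rw [H7 (r+1) (by omega)] at h0
    rw [h0]; ring
  -- H5
  have H5 : uSeq x x' (q+1) =
      1 - ((getBit x' q : ℕ) : ℤ) - ((getBit x' r : ℕ) : ℤ) := by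
    rw [uSeq_succ x x' (q+1) (by omega), H6 (q+2) (by omega) (by omega)]
    rw [show q + 2 - 1 = q + 1 from by omega, F5]
    ring
  -- H4
  have H4 : ∀ i, d < i → i ≤ q + 1 →
      uSeq x x' i = ((getBit x' (i-1) : ℕ) : ℤ) + 1
        - 2 * ((getBit x' q : ℕ) : ℤ) - ((getBit x' r : ℕ) : ℤ) := by
    intro i hi1 hi2
    have h0 := shiftZone x x' d q (by omega) F4 i hi1 hi2
    rw [H5] at h0
    rw [h0]; ring
  -- H3
  have H3 : uSeq x x' d = ((getBit x d : ℕ) : ℤ) + 1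
      - 2 * ((getBit x' q : ℕ) : ℤ) - ((getBit x' r : ℕ) : ℤ) := by
    rw [uSeq_succ x x' d (by omega), H4 (d+1) (by omega) (by omega),
      show d + 1 - 1 = d from by omega]
    ring
  -- H2
  have H2 : ∀ i, p < i → i ≤ d → uSeq x x' i = uSeq x x' d := by
    intro i hi1 hi2
    have h0 := constZone x x' p (d-1) (by omega)
      (fun l hl1 hl2 => F3 l hl1 (by omega)) i hi1 (by omega)
    rwa [show d - 1 + 1 = d from by omega] at h0
  -- H1
  have H1 : uSeq x x' p = 2 * ((getBit x p : ℕ) : ℤ) + ((getBit x d : ℕ) : ℤ)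
      - 2 * ((getBit x' q : ℕ) : ℤ) - ((getBit x' r : ℕ) : ℤ) := by
    rw [uSeq_succ x x' p (by omega), H2 (p+1) (by omega) (by omega), H3]
    have h2 : ((getBit x' p : ℕ) : ℤ) = 1 - ((getBit x p : ℕ) : ℤ) := by linarith
    rw [h2]; ring
  -- H0
  have H0 : ∀ i, 1 ≤ i → i ≤ p → uSeq x x' i = uSeq x x' p := by
    intro i hi1 hi2
    have h0 := constZone x x' 0 (p-1) (by omega)
      (fun l hl1 hl2 => F1 l hl1 (by omega)) i hi1 (by omega)
    rwa [show p - 1 + 1 = p from by omega] at h0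
  -- forced bit equalities from u 1 ≡ 0 (mod 4)
  have hu1 : uSeq x x' 1 = 2 * ((getBit x p : ℕ) : ℤ) + ((getBit x d : ℕ) : ℤ)
      - 2 * ((getBit x' q : ℕ) : ℤ) - ((getBit x' r : ℕ) : ℤ) := by
    rw [H0 1 le_rfl (by omega), H1]
  rw [hu1] at hmod
  have hbp : ((getBit x p : ℕ) : ℤ) = ((getBit x' q : ℕ) : ℤ) := by omega
  have hbd : ((getBit x d : ℕ) : ℤ) = ((getBit x' r : ℕ) : ℤ) := by omega
  -- value classification
  have V1 : ∀ i, 1 ≤ i → i ≤ q →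
      uSeq x x' i = 0 ∨
      uSeq x x' i = 1 - 2 * ((getBit x' q : ℕ) : ℤ) ∨
      uSeq x x' i = ((getBit x' (i-1) : ℕ) : ℤ) + 1
        - 2 * ((getBit x' q : ℕ) : ℤ) - ((getBit x' r : ℕ) : ℤ) := by
    intro i hi1 hi2
    rcases le_or_gt i p with h | h
    · left; rw [H0 i hi1 h, H1]; omega
    · rcases le_or_gt i d with h' | h'
      · right; left; rw [H2 i h h', H3]; omega
      · right; right; exact H4 i h' (by omega)
  have V2 : ∀ i, q + 1 ≤ i → i ≤ n →
      uSeq x x' i = 1 - ((getBit x' q : ℕ) : ℤ) - ((getBit x' r : ℕ) : ℤ) ∨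
      uSeq x x' i = ((getBit x' (i-1) : ℕ) : ℤ) - ((getBit x' r : ℕ) : ℤ) ∨
      uSeq x x' i = 0 := by
    intro i hi1 hi2
    rcases eq_or_lt_of_le hi1 with h | h
    · left; rw [← h, H5]
    · rcases le_or_gt i (r+1) with h' | h'
      · right; left; exact H6 i h h'
      · right; right; exact H7 i (by omega)
  refine ⟨?_, ?_, ?_⟩
  · rcases (by omega : (getBit x' q : ℕ) = 0 ∨ (getBit x' q : ℕ) = 1) with hc | hc
    · left; intro i hi
      simp only [Finset.mem_Icc] at hi
      have hbi := getBit_le x' (i-1)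
      rcases V1 i hi.1 hi.2 with h | h | h <;> rw [h] <;> omega
    · right; intro i hi
      simp only [Finset.mem_Icc] at hi
      have hbi := getBit_le x' (i-1)
      rcases V1 i hi.1 hi.2 with h | h | h <;> rw [h] <;> omega
  · rcases (by omega : (getBit x' r : ℕ) = 0 ∨ (getBit x' r : ℕ) = 1) with hc | hc
    · left; intro i hi
      simp only [Finset.mem_Icc] at hi
      have hbi := getBit_le x' (i-1)
      rcases V2 i hi.1 hi.2 with h | h | h <;> rw [h] <;> omega
    · right; intro i hi
      simp only [Finset.mem_Icc] at hi
      have hbi := getBit_le x' (i-1)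
      rcases V2 i hi.1 hi.2 with h | h | h <;> rw [h] <;> omega
  · intro i hi
    simp only [Finset.mem_Icc] at hi
    have hbi := getBit_le x' (i-1)
    rw [abs_le]
    rcases le_or_gt i q with h | h
    · rcases V1 i hi.1 h with hv | hv | hv <;> rw [hv] <;> constructor <;> omega
    · rcases V2 i h hi.2 with hv | hv | hv <;> rw [hv] <;> constructor <;> omega
lemma key_pt {n : ℕ} {x x' : Fin n → Fin 2} {d1 e1 d2 e2 : ℕ}
    (hE : delSub x d1 e1 = delSub x' d2 e2) (j : ℕ) (hj : 1 ≤ j) (hj2 : j + 1 ≤ n) :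
    (if j < d1 then getBit (substAt x e1) j else getBit (substAt x e1) (j+1)) =
    (if j < d2 then getBit (substAt x' e2) j else getBit (substAt x' e2) (j+1)) := by
  have hlt : j - 1 < n - 1 := by omega
  have h := congrFun hE ⟨j-1, hlt⟩
  simp only [delSub, delAt] at h
  rw [show j - 1 + 1 = j from by omega, show j - 1 + 2 = j + 1 from by omega] at h
  exact h

/-- Claim 2, Case (ii): with `λ₂ = e2 + 1` (if `e1 < d1 ≤ e2 < d2`)
or `λ₂ = e1` (if `e2 < d1 < e1 ≤ d2`), the sequence `u` is sign-constant on
`[1,λ₂−1]` and on `[λ₂,n]`, and `|u_i| ≤ 2` everywhere. -/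
theorem stmt16 (n : ℕ) (hn : 2 ≤ n) (x x' : Fin n → Fin 2)
    (hwt : wt x ≡ wt x' [MOD 4])
    (d1 e1 d2 e2 lam2 : ℕ)
    (hd1 : d1 ∈ Finset.Icc 1 n) (he1 : e1 ∈ Finset.Icc 1 n)
    (hd2 : d2 ∈ Finset.Icc 1 n) (he2 : e2 ∈ Finset.Icc 1 n)
    (h1 : d1 ≠ e1) (h2 : d2 ≠ e2)
    (hE : delSub x d1 e1 = delSub x' d2 e2)
    (hcase : (e1 < d1 ∧ d1 ≤ e2 ∧ e2 < d2 ∧ lam2 = e2 + 1) ∨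
             (e2 < d1 ∧ d1 < e1 ∧ e1 ≤ d2 ∧ lam2 = e1)) :
    ((∀ i ∈ Finset.Icc 1 (lam2 - 1), 0 ≤ uSeq x x' i) ∨
      (∀ i ∈ Finset.Icc 1 (lam2 - 1), uSeq x x' i ≤ 0)) ∧
    ((∀ i ∈ Finset.Icc lam2 n, 0 ≤ uSeq x x' i) ∨
      (∀ i ∈ Finset.Icc lam2 n, uSeq x x' i ≤ 0)) ∧
    (∀ i ∈ Finset.Icc 1 n, |uSeq x x' i| ≤ 2) := by
  simp only [Finset.mem_Icc] at hd1 he1 hd2 he2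
  have hmod : (4 : ℤ) ∣ uSeq x x' 1 := by
    rw [uSeq_one]
    have := hwt
    unfold Nat.ModEq at this
    omega
  rcases hcase with ⟨hA1, hA2, hA3, hlam⟩ | ⟨hB1, hB2, hB3, hlam⟩
  · -- Case A: e1 < d1 ≤ e2 < d2, lam2 = e2 + 1;  p = e1, d = d1, q = e2, r = d2
    have F1 : ∀ l, 1 ≤ l → l < e1 → ((getBit x l : ℕ) : ℤ) = ((getBit x' l : ℕ) : ℤ) := by
      intro l hl1 hl2
      have hk := key_pt hE l hl1 (by omega)
      rw [if_pos (by omega), if_pos (by omega),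
        getBit_substAt x e1 l (by omega) (by omega),
        getBit_substAt x' e2 l (by omega) (by omega),
        if_neg (by omega), if_neg (by omega)] at hk
      exact_mod_cast congrArg Fin.val hk
    have F2 : ((getBit x e1 : ℕ) : ℤ) + ((getBit x' e1 : ℕ) : ℤ) = 1 := by
      have hk := key_pt hE e1 (by omega) (by omega)
      rw [if_pos (by omega), if_pos (by omega),
        getBit_substAt x e1 e1 (by omega) (by omega),
        getBit_substAt x' e2 e1 (by omega) (by omega),
        if_pos rfl, if_neg (by omega)] at hk
      have := fin2_flip _ _ hk.symm
      omega
    have F3 : ∀ l, e1 < l → l < d1 → ((getBit x l : ℕ) : ℤ) = ((getBit x' l : ℕ) : ℤ) := by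
      intro l hl1 hl2
      have hk := key_pt hE l (by omega) (by omega)
      rw [if_pos (by omega), if_pos (by omega),
        getBit_substAt x e1 l (by omega) (by omega),
        getBit_substAt x' e2 l (by omega) (by omega),
        if_neg (by omega), if_neg (by omega)] at hk
      exact_mod_cast congrArg Fin.val hk
    have F4 : ∀ l, d1 < l → l ≤ e2 → ((getBit x l : ℕ) : ℤ) = ((getBit x' (l-1) : ℕ) : ℤ) := by
      intro l hl1 hl2
      have hk := key_pt hE (l-1) (by omega) (by omega)
      rw [if_neg (by omega), if_pos (by omega),
        show l - 1 + 1 = l from by omega,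
        getBit_substAt x e1 l (by omega) (by omega),
        getBit_substAt x' e2 (l-1) (by omega) (by omega),
        if_neg (by omega), if_neg (by omega)] at hk
      exact_mod_cast congrArg Fin.val hk
    have F5 : ((getBit x (e2+1) : ℕ) : ℤ) = 1 - ((getBit x' e2 : ℕ) : ℤ) := by
      have hk := key_pt hE e2 (by omega) (by omega)
      rw [if_neg (by omega), if_pos (by omega),
        getBit_substAt x e1 (e2+1) (by omega) (by omega),
        getBit_substAt x' e2 e2 (by omega) (by omega),
        if_neg (by omega), if_pos rfl] at hk
      have := fin2_flip _ _ hk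
      omega
    have F6 : ∀ l, e2 + 1 < l → l ≤ d2 → ((getBit x l : ℕ) : ℤ) = ((getBit x' (l-1) : ℕ) : ℤ) := by
      intro l hl1 hl2
      have hk := key_pt hE (l-1) (by omega) (by omega)
      rw [if_neg (by omega), if_pos (by omega),
        show l - 1 + 1 = l from by omega,
        getBit_substAt x e1 l (by omega) (by omega),
        getBit_substAt x' e2 (l-1) (by omega) (by omega),
        if_neg (by omega), if_neg (by omega)] at hk
      exact_mod_cast congrArg Fin.val hk
    have F7 : ∀ l, d2 < l → l ≤ n → ((getBit x l : ℕ) : ℤ) = ((getBit x' l : ℕ) : ℤ) := by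
      intro l hl1 hl2
      have hk := key_pt hE (l-1) (by omega) (by omega)
      rw [if_neg (by omega), if_neg (by omega),
        show l - 1 + 1 = l from by omega,
        getBit_substAt x e1 l (by omega) (by omega),
        getBit_substAt x' e2 l (by omega) (by omega),
        if_neg (by omega), if_neg (by omega)] at hk
      exact_mod_cast congrArg Fin.val hk
    have hmain := main_aux x x' e1 d1 e2 d2 (by omega) (by omega) (by omega) (by omega)
      (by omega) hmod F1 F2 F3 F4 F5 F6 F7
    rw [show lam2 - 1 = e2 from by omega, show lam2 = e2 + 1 from hlam]
    exact hmain
  · -- Case B: e2 < d1 < e1 ≤ d2, lam2 = e1;  p = e2, d = d1, q = e1 - 1, r = d2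
    have F1 : ∀ l, 1 ≤ l → l < e2 → ((getBit x l : ℕ) : ℤ) = ((getBit x' l : ℕ) : ℤ) := by
      intro l hl1 hl2
      have hk := key_pt hE l hl1 (by omega)
      rw [if_pos (by omega), if_pos (by omega),
        getBit_substAt x e1 l (by omega) (by omega),
        getBit_substAt x' e2 l (by omega) (by omega),
        if_neg (by omega), if_neg (by omega)] at hk
      exact_mod_cast congrArg Fin.val hk
    have F2 : ((getBit x e2 : ℕ) : ℤ) + ((getBit x' e2 : ℕ) : ℤ) = 1 := by
      have hk := key_pt hE e2 (by omega) (by omega)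
      rw [if_pos (by omega), if_pos (by omega),
        getBit_substAt x e1 e2 (by omega) (by omega),
        getBit_substAt x' e2 e2 (by omega) (by omega),
        if_neg (by omega), if_pos rfl] at hk
      have := fin2_flip _ _ hk
      omega
    have F3 : ∀ l, e2 < l → l < d1 → ((getBit x l : ℕ) : ℤ) = ((getBit x' l : ℕ) : ℤ) := by
      intro l hl1 hl2
      have hk := key_pt hE l (by omega) (by omega)
      rw [if_pos (by omega), if_pos (by omega),
        getBit_substAt x e1 l (by omega) (by omega),
        getBit_substAt x' e2 l (by omega) (by omega),
        if_neg (by omega), if_neg (by omega)] at hk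
      exact_mod_cast congrArg Fin.val hk
    have F4 : ∀ l, d1 < l → l ≤ e1 - 1 → ((getBit x l : ℕ) : ℤ) = ((getBit x' (l-1) : ℕ) : ℤ) := by
      intro l hl1 hl2
      have hk := key_pt hE (l-1) (by omega) (by omega)
      rw [if_neg (by omega), if_pos (by omega),
        show l - 1 + 1 = l from by omega,
        getBit_substAt x e1 l (by omega) (by omega),
        getBit_substAt x' e2 (l-1) (by omega) (by omega),
        if_neg (by omega), if_neg (by omega)] at hk
      exact_mod_cast congrArg Fin.val hk
    have F5 : ((getBit x (e1 - 1 + 1) : ℕ) : ℤ) = 1 - ((getBit x' (e1 - 1) : ℕ) : ℤ) := by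
      have hk := key_pt hE (e1 - 1) (by omega) (by omega)
      rw [if_neg (by omega), if_pos (by omega),
        show e1 - 1 + 1 = e1 from by omega,
        getBit_substAt x e1 e1 (by omega) (by omega),
        getBit_substAt x' e2 (e1 - 1) (by omega) (by omega),
        if_pos rfl, if_neg (by omega)] at hk
      have := fin2_flip _ _ hk.symm
      rw [show e1 - 1 + 1 = e1 from by omega]
      omega
    have F6 : ∀ l, e1 - 1 + 1 < l → l ≤ d2 → ((getBit x l : ℕ) : ℤ) = ((getBit x' (l-1) : ℕ) : ℤ) := by
      intro l hl1 hl2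
      rw [show e1 - 1 + 1 = e1 from by omega] at hl1
      have hk := key_pt hE (l-1) (by omega) (by omega)
      rw [if_neg (by omega), if_pos (by omega),
        show l - 1 + 1 = l from by omega,
        getBit_substAt x e1 l (by omega) (by omega),
        getBit_substAt x' e2 (l-1) (by omega) (by omega),
        if_neg (by omega), if_neg (by omega)] at hk
      exact_mod_cast congrArg Fin.val hk
    have F7 : ∀ l, d2 < l → l ≤ n → ((getBit x l : ℕ) : ℤ) = ((getBit x' l : ℕ) : ℤ) := by
      intro l hl1 hl2
      have hk := key_pt hE (l-1) (by omega) (by omega)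
      rw [if_neg (by omega), if_neg (by omega),
        show l - 1 + 1 = l from by omega,
        getBit_substAt x e1 l (by omega) (by omega),
        getBit_substAt x' e2 l (by omega) (by omega),
        if_neg (by omega), if_neg (by omega)] at hk
      exact_mod_cast congrArg Fin.val hk
    have hmain := main_aux x x' e2 d1 (e1 - 1) d2 (by omega) (by omega) (by omega) (by omega)
      (by omega) hmod F1 F2 F3 F4 F5 F6 F7
    rw [show lam2 - 1 = e1 - 1 from by omega, show lam2 = e1 - 1 + 1 from by omega]
    exact hmain
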